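/- Let u be a reduced monomial in the presented algebra A_n. Then: (i) between any two consecutive occurrences of E_0 in u there is exactly one letter not commuting with E_0 (namely one occurrence of E_1); (ii) between any two consecutive occurrences of E_n there is exactly one occurrence of E_{n−1}; (iii) between any two consecutive occurrences of E_i for 1 ≤ i ≤ n−1 there are exactly two letters not commuting with E_i, namely one occurrence each of E_{i−1} and E_{i+1}. -/

import Mathlib

open FreeAlgebra

/-- The six parameters `δ, δ_L, δ_R, κ_L, κ_R, κ_{LR}` of the symplectic blob algebra. -/
structure Params (k : Type*) where
  δ : k
  δL : k
  δR : k
  κL : k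
  κR : k
  κLR : k

/-- The word `I`: the product of the odd-indexed generators `E_1 E_3 ⋯`. -/
def Iword (n : ℕ) : List (Fin (n + 1)) :=
  (List.finRange (n + 1)).filter (fun i => i.val % 2 = 1)

/-- The word `J`: the product of the even-indexed generators `E_0 E_2 ⋯`. -/
def Jword (n : ℕ) : List (Fin (n + 1)) :=
  (List.finRange (n + 1)).filter (fun i => i.val % 2 = 0)

/-- The monomial in the free algebra corresponding to a word in the generators. -/
def wordProd (k : Type*) [CommRing k] {n : ℕ} (u : List (Fin (n + 1))) :
    FreeAlgebra k (Fin (n + 1)) :=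
  (u.map (FreeAlgebra.ι k)).prod

/-- The defining relations of the algebra `A_n` (the quotient of the two boundary
Temperley–Lieb algebra by the topological relations `IJI = κ_{LR} I`, `JIJ = κ_{LR} J`),
with `E = E_0` and `F = E_n`. -/
inductive SBRel {k : Type*} [CommRing k] {n : ℕ} (p : Params k) :
    FreeAlgebra k (Fin (n + 1)) → FreeAlgebra k (Fin (n + 1)) → Prop
  | comm (i j : Fin (n + 1)) (h : i.val + 1 < j.val) :
      SBRel p (ι k i * ι k j) (ι k j * ι k i)
  | left_sq :
      SBRel p (ι k (0 : Fin (n + 1)) * ι k 0) (p.δL • ι k (0 : Fin (n + 1)))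
  | right_sq :
      SBRel p (ι k (Fin.last n) * ι k (Fin.last n)) (p.δR • ι k (Fin.last n))
  | mid_sq (i : Fin (n + 1)) (h1 : 1 ≤ i.val) (h2 : i.val < n) :
      SBRel p (ι k i * ι k i) (p.δ • ι k i)
  | left_braid (i j : Fin (n + 1)) (hi : i.val = 1) (hj : j.val = 0) :
      SBRel p (ι k i * ι k j * ι k i) (p.κL • ι k i)
  | right_braid (i j : Fin (n + 1)) (hi : i.val + 1 = n) (hj : j.val = n) :
      SBRel p (ι k i * ι k j * ι k i) (p.κR • ι k i)
  | braid_up (i j : Fin (n + 1)) (h : i.val + 1 = j.val) (h1 : 1 ≤ i.val) (h2 : j.val < n) :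
      SBRel p (ι k i * ι k j * ι k i) (ι k i)
  | braid_down (i j : Fin (n + 1)) (h : i.val + 1 = j.val) (h1 : 1 ≤ i.val) (h2 : j.val < n) :
      SBRel p (ι k j * ι k i * ι k j) (ι k j)
  | topI :
      SBRel p (wordProd k (Iword n ++ Jword n ++ Iword n)) (p.κLR • wordProd k (Iword n))
  | topJ :
      SBRel p (wordProd k (Jword n ++ Iword n ++ Jword n)) (p.κLR • wordProd k (Jword n))

/-- The presented algebra `A_n`. -/
def SBAlg (k : Type*) [CommRing k] (n : ℕ) (p : Params k) :=
  RingQuot (SBRel (k := k) (n := n) p)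

noncomputable instance (k : Type*) [CommRing k] (n : ℕ) (p : Params k) :
    Ring (SBAlg k n p) := inferInstanceAs (Ring (RingQuot (SBRel p)))

noncomputable instance (k : Type*) [CommRing k] (n : ℕ) (p : Params k) :
    Algebra k (SBAlg k n p) := inferInstanceAs (Algebra k (RingQuot (SBRel p)))

/-- The image of a word in the generators in the algebra `A_n`. -/
noncomputable def algWord {k : Type*} [CommRing k] {n : ℕ} (p : Params k)
    (u : List (Fin (n + 1))) : SBAlg k n p :=
  RingQuot.mkAlgHom k (SBRel p) (wordProd k u)

/-- The generator `E_i` of `A_n`. -/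
noncomputable def gen {k : Type*} [CommRing k] {n : ℕ} (p : Params k) (i : Fin (n + 1)) :
    SBAlg k n p :=
  RingQuot.mkAlgHom k (SBRel p) (ι k i)

/-- A monomial `u` in the generators is *reduced* if it cannot be expressed, using the
relations, as a scalar multiple of a strictly shorter monomial. -/
def Reduced {k : Type*} [CommRing k] {n : ℕ} (p : Params k) (u : List (Fin (n + 1))) :
    Prop :=
  ∀ (v : List (Fin (n + 1))) (c : k), v.length < u.length → algWord p u ≠ c • algWord p v

/-- The generators `E_i` and `E_j` do not commute: `|i - j| = 1`. -/
def Adj {n : ℕ} (i j : Fin (n + 1)) : Prop :=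
  i.val + 1 = j.val ∨ j.val + 1 = i.val


section Aux

variable {k : Type*} [CommRing k] {n : ℕ} (p : Params k)

lemma algWord_eq (u : List (Fin (n + 1))) :
    algWord p u = (u.map (gen p)).prod := by
  simp only [algWord, wordProd, gen]
  rw [map_list_prod, List.map_map]
  rfl

/-- `x` commutes with `i`. -/
def Far {n : ℕ} (i x : Fin (n + 1)) : Prop := x.val + 1 < i.val ∨ i.val + 1 < x.val

lemma gen_comm {i x : Fin (n + 1)} (h : Far i x) :
    gen p x * gen p i = gen p i * gen p x := by
  rcases h with h | h
  · have := RingQuot.mkAlgHom_rel k (SBRel.comm (p := p) x i h)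
    (simp only [map_mul] at this; exact this)
  · have := RingQuot.mkAlgHom_rel k (SBRel.comm (p := p) i x h)
    (simp only [map_mul] at this; exact this.symm)

lemma comm_prod {i : Fin (n + 1)} {a : List (Fin (n + 1))} (h : ∀ x ∈ a, Far i x) :
    gen p i * (a.map (gen p)).prod = (a.map (gen p)).prod * gen p i := by
  induction a with
  | nil => simp
  | cons x t ih =>
    simp only [List.map_cons, List.prod_cons]
    rw [← mul_assoc, ← gen_comm p (h x (by simp)), mul_assoc,
      ih (fun y hy => h y (by simp [hy])), ← mul_assoc]

lemma gen_sq (i : Fin (n + 1)) : ∃ c : k, gen p i * gen p i = c • gen p i := by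
  rcases Nat.lt_or_ge i.val 1 with h0 | h1
  · have hi : i = 0 := Fin.ext (by simpa using Nat.lt_one_iff.1 h0)
    refine ⟨p.δL, ?_⟩
    subst hi
    (have h' := RingQuot.mkAlgHom_rel k (SBRel.left_sq (p := p) (n := n)); simp only [map_mul, map_smul] at h'; exact h')
  · rcases Nat.lt_or_ge i.val n with h2 | h2
    · exact ⟨p.δ, by (have h' := RingQuot.mkAlgHom_rel k (SBRel.mid_sq (p := p) i h1 h2); simp only [map_mul, map_smul] at h'; exact h')⟩
    · have hlt := i.isLt
      have hi : i = Fin.last n := Fin.ext (by simp [Fin.last]; omega)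
      refine ⟨p.δR, ?_⟩
      subst hi
      (have h' := RingQuot.mkAlgHom_rel k (SBRel.right_sq (p := p) (n := n)); simp only [map_mul, map_smul] at h'; exact h')

lemma gen_braid {i j : Fin (n + 1)} (h1 : 1 ≤ i.val) (h2 : i.val < n)
    (hj : j.val + 1 = i.val ∨ i.val + 1 = j.val) :
    ∃ c : k, gen p i * gen p j * gen p i = c • gen p i := by
  rcases hj with hj | hj
  · rcases Nat.lt_or_ge i.val 2 with hlt | hge
    · exact ⟨p.κL, by (have h' := RingQuot.mkAlgHom_rel k (SBRel.left_braid (p := p) i j (by omega) (by omega)); simp only [map_mul, map_smul] at h'; exact h')⟩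
    · exact ⟨1, by rw [one_smul]; (have h' := RingQuot.mkAlgHom_rel k (SBRel.braid_down (p := p) j i hj (by omega) h2); simp only [map_mul] at h'; exact h')⟩
  · have hjlt := j.isLt
    rcases Nat.lt_or_ge j.val n with hlt | hge
    · exact ⟨1, by rw [one_smul]; (have h' := RingQuot.mkAlgHom_rel k (SBRel.braid_up (p := p) i j hj h1 hlt); simp only [map_mul] at h'; exact h')⟩
    · exact ⟨p.κR, by (have h' := RingQuot.mkAlgHom_rel k (SBRel.right_braid (p := p) i j (by omega) (by omega)); simp only [map_mul, map_smul] at h'; exact h')⟩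

lemma rearrange_sq {S : Type*} [Ring S] [Algebra k S] (A P B g : S) (c : k)
    (hg : g * P = P * g) (hsq : g * g = c • g) :
    A * (g * (P * (g * B))) = c • (A * (P * (g * B))) := by
  rw [← mul_assoc g P (g * B), hg, mul_assoc P g (g * B), ← mul_assoc g g B, hsq,
    smul_mul_assoc, mul_smul_comm, mul_smul_comm]

lemma rearrange_braid {S : Type*} [Ring S] [Algebra k S] (A Pa Pb B g h : S) (c : k)
    (ha : g * Pa = Pa * g) (hb : g * Pb = Pb * g) (hbr : g * h * g = c • g) :
    A * (g * (Pa * (h * (Pb * (g * B))))) = c • (A * (Pa * (g * (Pb * B)))) := by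
  rw [← mul_assoc Pb g B, ← hb, mul_assoc g Pb B, ← mul_assoc g Pa, ha, mul_assoc Pa g,
    ← mul_assoc g h, ← mul_assoc (g * h) g, hbr, smul_mul_assoc, mul_smul_comm,
    mul_smul_comm]

lemma not_reduced_sq {u₁ u₂ u₃ : List (Fin (n + 1))} {i : Fin (n + 1)}
    (hFar : ∀ x ∈ u₂, Far i x) :
    ¬ Reduced p (u₁ ++ i :: (u₂ ++ i :: u₃)) := by
  obtain ⟨c, hc⟩ := gen_sq p i
  intro hred
  refine hred (u₁ ++ (u₂ ++ i :: u₃)) c ?_ ?_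
  · simp only [List.length_append, List.length_cons]; omega
  · simp only [algWord_eq, List.map_append, List.map_cons, List.prod_append,
      List.prod_cons, mul_assoc]
    exact rearrange_sq _ _ _ _ c (comm_prod p hFar) hc

lemma not_reduced_braid {u₁ a b u₃ : List (Fin (n + 1))} {i j : Fin (n + 1)}
    (hbr : ∃ c : k, gen p i * gen p j * gen p i = c • gen p i)
    (hFa : ∀ x ∈ a, Far i x) (hFb : ∀ x ∈ b, Far i x) :
    ¬ Reduced p (u₁ ++ i :: ((a ++ j :: b) ++ i :: u₃)) := by
  obtain ⟨c, hc⟩ := hbr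
  intro hred
  refine hred (u₁ ++ ((a ++ i :: b) ++ u₃)) c ?_ ?_
  · simp only [List.length_append, List.length_cons]; omega
  · simp only [algWord_eq, List.map_append, List.map_cons, List.prod_append,
      List.prod_cons, mul_assoc]
    exact rearrange_braid _ _ _ _ _ _ c (comm_prod p hFa) (comm_prod p hFb) hc

lemma exists_first_split {α : Type*} {a : α} {l : List α} [DecidableEq α] (h : a ∈ l) :
    ∃ x z, l = x ++ a :: z ∧ a ∉ x := by
  induction l with
  | nil => simp at h
  | cons b t ih =>
    by_cases hb : a = b
    · exact ⟨[], t, by simp [hb], by simp⟩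
    · obtain ⟨x, z, h1, h2⟩ := ih (by
        rcases List.mem_cons.1 h with h' | h'
        · exact absurd h' hb
        · exact h')
      exact ⟨b :: x, z, by rw [h1]; rfl, by
        simp only [List.mem_cons, not_or]; exact ⟨hb, h2⟩⟩

lemma exists_pair_split {α : Type*} [DecidableEq α] {a : α} {l : List α}
    (h : 2 ≤ l.count a) : ∃ x y z, l = x ++ a :: y ++ a :: z ∧ a ∉ y := by
  have h1 : a ∈ l := List.count_pos_iff.1 (by omega)
  obtain ⟨x, t, rfl, hx⟩ := exists_first_split h1
  have hxc : (x : List α).count a = 0 := List.count_eq_zero.2 hx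
  have h2 : a ∈ t := by
    rw [List.count_append, List.count_cons_self, hxc] at h
    exact List.count_pos_iff.1 (by omega)
  obtain ⟨y, z, rfl, hy⟩ := exists_first_split h2
  exact ⟨x, y, z, by simp, hy⟩

lemma main_lemma {k : Type*} [CommRing k] {n : ℕ} (_hn : 1 ≤ n) (p : Params k) :
    ∀ (N : ℕ) (u₂ : List (Fin (n + 1))), u₂.length < N →
      ∀ (u₁ u₃ : List (Fin (n + 1))) (i : Fin (n + 1)),
      Reduced p (u₁ ++ i :: (u₂ ++ i :: u₃)) → i ∉ u₂ →
      (∀ j : Fin (n + 1), j.val + 1 = i.val → u₂.count j = 1) ∧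
      (∀ j : Fin (n + 1), i.val + 1 = j.val → u₂.count j = 1) := by
  intro N
  induction N with
  | zero => intro u₂ h; omega
  | succ N ih =>
    intro u₂ hlen u₁ u₃ i hred hmem
    -- Step A : each neighbour occurs at most once
    have hle : ∀ j : Fin (n + 1), (j.val + 1 = i.val ∨ i.val + 1 = j.val) →
        u₂.count j ≤ 1 := by
      intro j hj
      by_contra hgt
      push_neg at hgt
      obtain ⟨x, y, z, hsp, hy⟩ := exists_pair_split (l := u₂) (a := j) (by omega)
      have heq : u₁ ++ i :: (u₂ ++ i :: u₃)
          = (u₁ ++ i :: x) ++ j :: (y ++ j :: (z ++ i :: u₃)) := by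
        rw [hsp]; simp [List.append_assoc]
      rw [heq] at hred
      have hylen : y.length < N := by
        have h2 : u₂.length = x.length + y.length + z.length + 2 := by
          rw [hsp]; simp only [List.length_append, List.length_cons]; omega
        omega
      have hiy : i ∉ y := fun hmem' => hmem (by rw [hsp]; simp [hmem'])
      obtain ⟨H1, H2⟩ := ih y hylen (u₁ ++ i :: x) (z ++ i :: u₃) j hred hy
      have hcy : y.count i = 0 := List.count_eq_zero.2 hiy
      rcases hj with hj | hj
      · have := H2 i hj; omega
      · have := H1 i hj; omega
    -- helper : if nothing in u₂ is adjacent to i, contradiction by the square relation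
    have hsquare : (∀ x ∈ u₂, ¬(x.val + 1 = i.val ∨ i.val + 1 = x.val)) → False := by
      intro hF
      refine not_reduced_sq p (fun x hx => ?_) hred
      have hni := hF x hx
      have hxne : x ≠ i := fun h => hmem (h ▸ hx)
      have hxv : x.val ≠ i.val := fun h => hxne (Fin.ext h)
      unfold Far; omega
    -- helper : lone adjacent letter o, nothing else adjacent, contradiction by braid
    have hbraid : ∀ o : Fin (n + 1), (o.val + 1 = i.val ∨ i.val + 1 = o.val) →
        1 ≤ i.val → i.val < n → o ∈ u₂ → u₂.count o = 1 →
        (∀ x ∈ u₂, x ≠ o → ¬(x.val + 1 = i.val ∨ i.val + 1 = x.val)) → False := by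
      intro o hadj h1 h2 ho hcnt hoth
      obtain ⟨a, b, hsp, hna⟩ := exists_first_split ho
      rw [hsp, List.count_append, List.count_cons_self,
        List.count_eq_zero.2 hna] at hcnt
      have hnb : o ∉ b := List.count_eq_zero.1 (by omega)
      have heq : u₁ ++ i :: (u₂ ++ i :: u₃) = u₁ ++ i :: ((a ++ o :: b) ++ i :: u₃) := by
        rw [hsp]
      rw [heq] at hred
      have hFany : ∀ x ∈ u₂, x ≠ o → Far i x := by
        intro x hx hxo
        have hni := hoth x hx hxo
        have hxne : x ≠ i := fun h => hmem (h ▸ hx)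
        have hxv : x.val ≠ i.val := fun h => hxne (Fin.ext h)
        unfold Far; omega
      refine not_reduced_braid p (gen_braid p h1 h2 hadj) (fun x hx => ?_)
        (fun x hx => ?_) hred
      · exact hFany x (by rw [hsp]; simp [hx]) (fun h => hna (h ▸ hx))
      · exact hFany x (by rw [hsp]; simp [hx]) (fun h => hnb (h ▸ hx))
    -- Step B : each neighbour occurs at least once
    have hge : ∀ j : Fin (n + 1), (j.val + 1 = i.val ∨ i.val + 1 = j.val) →
        1 ≤ u₂.count j := by
      intro j hj
      by_contra hc
      push_neg at hc
      have hjmem : j ∉ u₂ := List.count_eq_zero.1 (by omega)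
      have hxvj : ∀ x ∈ u₂, x.val ≠ j.val :=
        fun x hx h => hjmem (Fin.ext h ▸ hx)
      rcases hj with hj | hj
      · -- j is the left neighbour of i; 1 ≤ i.val
        rcases Nat.lt_or_ge i.val n with hin | hin
        · -- middle i : consider the right neighbour o
          set o : Fin (n + 1) := ⟨i.val + 1, by omega⟩ with ho_def
          have hov : o.val = i.val + 1 := rfl
          by_cases ho : o ∈ u₂
          · refine hbraid o (Or.inr hov.symm) (by omega) hin ho
              (le_antisymm (hle o (Or.inr hov.symm)) (List.count_pos_iff.2 ho)) ?_
            intro x hx hxo hadj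
            have hxv : x.val ≠ o.val := fun h => hxo (Fin.ext h)
            have := hxvj x hx
            omega
          · refine hsquare (fun x hx hadj => ?_)
            have hxo : x.val ≠ o.val := fun h => ho (Fin.ext h ▸ hx)
            have := hxvj x hx
            omega
        · -- i.val = n : no right neighbour exists
          refine hsquare (fun x hx hadj => ?_)
          have hxl := x.isLt
          have := hxvj x hx
          omega
      · -- j is the right neighbour of i; i.val < n
        have hjlt := j.isLt
        have hin : i.val < n := by omega
        rcases Nat.lt_or_ge 0 i.val with hi1 | hi1
        · -- middle i : consider the left neighbour o
          set o : Fin (n + 1) := ⟨i.val - 1, by omega⟩ with ho_def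
          have hov : o.val = i.val - 1 := rfl
          by_cases ho : o ∈ u₂
          · refine hbraid o (Or.inl (by omega)) (by omega) hin ho
              (le_antisymm (hle o (Or.inl (by omega))) (List.count_pos_iff.2 ho)) ?_
            intro x hx hxo hadj
            have hxv : x.val ≠ o.val := fun h => hxo (Fin.ext h)
            have := hxvj x hx
            omega
          · refine hsquare (fun x hx hadj => ?_)
            have hxo : x.val ≠ o.val := fun h => ho (Fin.ext h ▸ hx)
            have := hxvj x hx
            omega
        · -- i.val = 0 : no left neighbour exists
          refine hsquare (fun x hx hadj => ?_)
          have := hxvj x hx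
          omega
    exact ⟨fun j hj => le_antisymm (hle j (Or.inl hj)) (hge j (Or.inl hj)),
      fun j hj => le_antisymm (hle j (Or.inr hj)) (hge j (Or.inr hj))⟩

end Aux

/-- Let `u` be a reduced monomial written `u = u₁ E_i u₂ E_i u₃` with the two displayed
occurrences of `E_i` consecutive.  Then: (i) if `i = 0`, between them there is exactly
one letter not commuting with `E_0`, namely one occurrence of `E_1`; (ii) if `i = n`,
exactly one occurrence of `E_{n-1}`; (iii) if `1 ≤ i ≤ n-1`, exactly two letters not
commuting with `E_i`, namely one occurrence each of `E_{i-1}` and `E_{i+1}`. -/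
theorem between_consecutive_occurrences {k : Type*} [Field k] {n : ℕ} (hn : 1 ≤ n)
    (p : Params k) (u₁ u₂ u₃ : List (Fin (n + 1))) (i : Fin (n + 1))
    (hred : Reduced p (u₁ ++ i :: (u₂ ++ i :: u₃)))
    (hcons : i ∉ u₂) :
    (i.val = 0 →
      u₂.countP (fun g => g.val == 1) = 1 ∧ ∀ g ∈ u₂, Adj g i → g.val = 1) ∧
    (i.val = n →
      u₂.countP (fun g => g.val + 1 == n) = 1 ∧ ∀ g ∈ u₂, Adj g i → g.val + 1 = n) ∧
    (1 ≤ i.val → i.val < n →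
      u₂.countP (fun g => g.val + 1 == i.val) = 1 ∧
      u₂.countP (fun g => g.val == i.val + 1) = 1 ∧
      ∀ g ∈ u₂, Adj g i → g.val + 1 = i.val ∨ g.val = i.val + 1) := by
  obtain ⟨H1, H2⟩ := main_lemma hn p (u₂.length + 1) u₂ (Nat.lt_succ_self _) u₁ u₃ i hred hcons
  refine ⟨fun hi => ?_, fun hi => ?_, fun hi1 hi2 => ?_⟩
  · constructor
    · have hc := H2 ⟨1, by omega⟩ (by simp [hi])
      refine Eq.trans ?_ hc
      refine List.countP_congr (fun x hx => ?_)
      simp [Fin.ext_iff]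
    · intro g hg hadj
      rcases hadj with h | h <;> omega
  · constructor
    · have hc := H1 ⟨n - 1, by omega⟩ (by simp; omega)
      refine Eq.trans ?_ hc
      refine List.countP_congr (fun x hx => ?_)
      simp [Fin.ext_iff]
      omega
    · intro g hg hadj
      have := g.isLt
      rcases hadj with h | h <;> omega
  · refine ⟨?_, ?_, fun g hg hadj => hadj.imp (fun h => h) (fun h => h.symm)⟩
    · have hc := H1 ⟨i.val - 1, by omega⟩ (by simp; omega)
      refine Eq.trans ?_ hc
      refine List.countP_congr (fun x hx => ?_)
      simp [Fin.ext_iff]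
      omega
    · have hc := H2 ⟨i.val + 1, by omega⟩ (by simp)
      refine Eq.trans ?_ hc
      refine List.countP_congr (fun x hx => ?_)
      simp [Fin.ext_iff]
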